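/- Define SPD trees, W(T), and Cost(T, x) as in context. For every SPD tree T and every c > 0 there exists an assignment x of positive shares to the leaves of T with (sum of all leaf shares) = c and Cost(T, x) = W(T) / c; namely, the assignment obtained by recursively splitting the capacity proportionally to the square roots of the children's W-values at serial nodes and proportionally to the children's W-values at parallel nodes. -/

import Mathlib

/-- SPD trees with leaf data `α`: a leaf, or a serial/parallel composition of a list of
SPD trees. -/
inductive SPD (α : Type) : Type
  | leaf : α → SPD α
  | ser : List (SPD α) → SPD α
  | par : List (SPD α) → SPD α

namespace SPD

/-- Map over leaf data. -/
def map {α β : Type} (f : α → β) : SPD α → SPD β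
  | leaf a => leaf (f a)
  | ser l => ser (l.attach.map fun t => map f t.1)
  | par l => par (l.attach.map fun t => map f t.1)
termination_by t => sizeOf t
decreasing_by
  all_goals have := List.sizeOf_lt_of_mem t.2; simp [SPD.ser.sizeOf_spec, SPD.par.sizeOf_spec] at *; omega

/-- The weight `W(T)` computed by `computeWeights`: the weight of a leaf, the squared
sum of square roots at serial nodes, and the sum at parallel nodes. -/
noncomputable def W : SPD ℝ → ℝ
  | leaf w => w
  | ser l => (l.attach.map fun t => Real.sqrt (W t.1)).sum ^ 2
  | par l => (l.attach.map fun t => W t.1).sum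
termination_by t => sizeOf t
decreasing_by
  all_goals have := List.sizeOf_lt_of_mem t.2; simp at *; omega

/-- The continuous streaming cost of a tree whose leaves carry (weight, share) pairs:
`w / x` at a leaf, the sum at serial nodes, the maximum at parallel nodes. -/
noncomputable def Cost : SPD (ℝ × ℝ) → ℝ
  | leaf p => p.1 / p.2
  | ser l => (l.attach.map fun t => Cost t.1).sum
  | par l => (l.attach.map fun t => Cost t.1).foldr max 0
termination_by t => sizeOf t
decreasing_by
  all_goals have := List.sizeOf_lt_of_mem t.2; simp at *; omega

/-- The total share assigned to the leaves. -/
def shareSum : SPD (ℝ × ℝ) → ℝ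
  | leaf p => p.2
  | ser l => (l.attach.map fun t => shareSum t.1).sum
  | par l => (l.attach.map fun t => shareSum t.1).sum
termination_by t => sizeOf t
decreasing_by
  all_goals have := List.sizeOf_lt_of_mem t.2; simp at *; omega

/-- Validity: leaf weights and shares are positive, and composition lists are nonempty. -/
inductive Valid : SPD (ℝ × ℝ) → Prop
  | leaf {p : ℝ × ℝ} : 0 < p.1 → 0 < p.2 → Valid (SPD.leaf p)
  | ser {l} : l ≠ [] → (∀ t ∈ l, Valid t) → Valid (SPD.ser l)
  | par {l} : l ≠ [] → (∀ t ∈ l, Valid t) → Valid (SPD.par l)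

end SPD

/-- Positive weights and nonempty compositions for a weight tree. -/
inductive SPD.PosWeights : SPD ℝ → Prop
  | leaf {w : ℝ} : 0 < w → SPD.PosWeights (SPD.leaf w)
  | ser {l} : l ≠ [] → (∀ t ∈ l, SPD.PosWeights t) → SPD.PosWeights (SPD.ser l)
  | par {l} : l ≠ [] → (∀ t ∈ l, SPD.PosWeights t) → SPD.PosWeights (SPD.par l)


namespace SPDAux

open SPD

lemma foldr_max_const (a : ℝ) (ha : 0 ≤ a) :
    ∀ L : List ℝ, L ≠ [] → (∀ x ∈ L, x = a) → L.foldr max 0 = a := by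
  intro L
  induction L with
  | nil => intro h; exact absurd rfl h
  | cons b t ih =>
    intro _ hall
    have hb : b = a := hall b (by simp)
    rcases eq_or_ne t [] with rfl | htne
    · simp [hb, ha]
    · have := ih htne (fun x hx => hall x (by simp [hx]))
      simp [List.foldr_cons, this, hb]

lemma sizeOf_le_of_mem {l : List (SPD ℝ)} {t : SPD ℝ} (ht : t ∈ l) {n : ℕ}
    (h : sizeOf l ≤ n) : sizeOf t ≤ n := by
  have := List.sizeOf_lt_of_mem ht; omega

lemma W_pos_aux : ∀ (n : ℕ) (T : SPD ℝ), sizeOf T ≤ n → T.PosWeights → 0 < T.W := by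
  intro n
  induction n with
  | zero => intro T hs _; cases T <;> simp at hs
  | succ n ih =>
    intro T hs hpos
    cases hpos with
    | @leaf w hw => rw [SPD.W]; exact hw
    | @ser l hne hall =>
      rw [SPD.W]
      simp only [SPD.ser.sizeOf_spec] at hs
      have hsum : 0 < (l.attach.map fun t => Real.sqrt (SPD.W t.1)).sum := by
        apply List.sum_pos
        · intro x hx
          obtain ⟨t, ht, rfl⟩ := List.mem_map.1 hx
          exact Real.sqrt_pos.2 (ih t.1 (sizeOf_le_of_mem t.2 (by omega)) (hall t.1 t.2))
        · simp [hne]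
      positivity
    | @par l hne hall =>
      rw [SPD.W]
      simp only [SPD.par.sizeOf_spec] at hs
      apply List.sum_pos
      · intro x hx
        obtain ⟨t, ht, rfl⟩ := List.mem_map.1 hx
        exact ih t.1 (sizeOf_le_of_mem t.2 (by omega)) (hall t.1 t.2)
      · simp [hne]

lemma W_pos {T : SPD ℝ} (h : T.PosWeights) : 0 < T.W :=
  W_pos_aux (sizeOf T) T le_rfl h

/-- The recursive share-splitting of the algorithm. -/
noncomputable def assign : SPD ℝ → ℝ → SPD (ℝ × ℝ)
  | .leaf w, c => .leaf (w, c)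
  | .ser l, c => .ser (l.attach.map fun t =>
      assign t.1 (Real.sqrt t.1.W / (l.map fun s => Real.sqrt s.W).sum * c))
  | .par l, c => .par (l.attach.map fun t =>
      assign t.1 (t.1.W / (l.map fun s => s.W).sum * c))
termination_by t _ => sizeOf t
decreasing_by
  all_goals have := List.sizeOf_lt_of_mem t.2; simp [SPD.ser.sizeOf_spec, SPD.par.sizeOf_spec] at *; omega

lemma main : ∀ (n : ℕ) (T : SPD ℝ), sizeOf T ≤ n → T.PosWeights → ∀ c : ℝ, 0 < c →
    SPD.map Prod.fst (assign T c) = T ∧ (assign T c).Valid ∧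
    (assign T c).shareSum = c ∧ (assign T c).Cost = T.W / c := by
  intro n
  induction n with
  | zero => intro T hs; cases T <;> simp at hs
  | succ n ih =>
    intro T hs hpos c hc
    cases hpos with
    | @leaf w hw =>
      refine ⟨?_, ?_, ?_, ?_⟩
      · rw [assign, SPD.map]
      · rw [assign]; exact SPD.Valid.leaf hw hc
      · rw [assign, SPD.shareSum]
      · rw [assign, SPD.Cost, SPD.W]
    | @ser l hne hall =>
      simp only [SPD.ser.sizeOf_spec] at hs
      set S : ℝ := (l.map fun s => Real.sqrt s.W).sum with hSdef
      have hWt : ∀ t ∈ l, 0 < SPD.W t := fun t ht => W_pos (hall t ht)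
      have hS : 0 < S := by
        apply List.sum_pos
        · intro x hx
          obtain ⟨t, ht, rfl⟩ := List.mem_map.1 hx
          exact Real.sqrt_pos.2 (hWt t ht)
        · simp [hne]
      have hx : ∀ t ∈ l, 0 < Real.sqrt t.W / S * c := fun t ht =>
        mul_pos (div_pos (Real.sqrt_pos.2 (hWt t ht)) hS) hc
      have hIH : ∀ t ∈ l,
          SPD.map Prod.fst (assign t (Real.sqrt t.W / S * c)) = t ∧
          (assign t (Real.sqrt t.W / S * c)).Valid ∧
          (assign t (Real.sqrt t.W / S * c)).shareSum = Real.sqrt t.W / S * c ∧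
          (assign t (Real.sqrt t.W / S * c)).Cost = t.W / (Real.sqrt t.W / S * c) :=
        fun t ht => ih t (sizeOf_le_of_mem ht (by omega)) (hall t ht) _ (hx t ht)
      refine ⟨?_, ?_, ?_, ?_⟩
      · rw [assign, SPD.map]
        congr 1
        rw [List.attach_map_val, List.map_map, ← hSdef]
        simp only [Function.comp_def]
        rw [List.map_congr_left (g := fun t : {x // x ∈ l} => t.1)
          (fun t _ => (hIH t.1 t.2).1)]
        simp
      · rw [assign]
        refine SPD.Valid.ser (by simp [hne]) ?_
        intro A hA
        obtain ⟨t, ht, rfl⟩ := List.mem_map.1 hA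
        exact (hIH t.1 t.2).2.1
      · rw [assign, SPD.shareSum]
        rw [List.attach_map_val, List.map_map]
        rw [List.map_congr_left
          (g := fun t : {x // x ∈ l} => Real.sqrt t.1.W * (S⁻¹ * c))
          (fun t _ => by
            rw [Function.comp_apply, (hIH t.1 t.2).2.2.1]; ring)]
        rw [List.sum_map_mul_right, List.attach_map_val (l := l) (f := fun s => Real.sqrt s.W), ← hSdef]
        field_simp
      · rw [assign, SPD.Cost, SPD.W]
        rw [List.attach_map_val, List.map_map]
        rw [List.map_congr_left
          (g := fun t : {x // x ∈ l} => Real.sqrt t.1.W * (S / c))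
          (fun t _ => by
            rw [Function.comp_apply, (hIH t.1 t.2).2.2.2]
            have h1 : (0:ℝ) < Real.sqrt t.1.W := Real.sqrt_pos.2 (hWt t.1 t.2)
            rw [← Real.sq_sqrt (hWt t.1 t.2).le]
            field_simp
            rw [Real.sqrt_sq h1.le])]
        rw [List.sum_map_mul_right, List.attach_map_val (l := l) (f := fun s => Real.sqrt s.W), ← hSdef]
        field_simp
    | @par l hne hall =>
      simp only [SPD.par.sizeOf_spec] at hs
      set S : ℝ := (l.map fun s => s.W).sum with hSdef
      have hWt : ∀ t ∈ l, 0 < SPD.W t := fun t ht => W_pos (hall t ht)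
      have hS : 0 < S := by
        apply List.sum_pos
        · intro x hx
          obtain ⟨t, ht, rfl⟩ := List.mem_map.1 hx
          exact hWt t ht
        · simp [hne]
      have hx : ∀ t ∈ l, 0 < t.W / S * c := fun t ht =>
        mul_pos (div_pos (hWt t ht) hS) hc
      have hIH : ∀ t ∈ l,
          SPD.map Prod.fst (assign t (t.W / S * c)) = t ∧
          (assign t (t.W / S * c)).Valid ∧
          (assign t (t.W / S * c)).shareSum = t.W / S * c ∧
          (assign t (t.W / S * c)).Cost = t.W / (t.W / S * c) :=
        fun t ht => ih t (sizeOf_le_of_mem ht (by omega)) (hall t ht) _ (hx t ht)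
      refine ⟨?_, ?_, ?_, ?_⟩
      · rw [assign, SPD.map]
        congr 1
        rw [List.attach_map_val, List.map_map, ← hSdef]
        simp only [Function.comp_def]
        rw [List.map_congr_left (g := fun t : {x // x ∈ l} => t.1)
          (fun t _ => (hIH t.1 t.2).1)]
        simp
      · rw [assign]
        refine SPD.Valid.par (by simp [hne]) ?_
        intro A hA
        obtain ⟨t, ht, rfl⟩ := List.mem_map.1 hA
        exact (hIH t.1 t.2).2.1
      · rw [assign, SPD.shareSum]
        rw [List.attach_map_val, List.map_map]
        rw [List.map_congr_left
          (g := fun t : {x // x ∈ l} => t.1.W * (S⁻¹ * c))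
          (fun t _ => by
            rw [Function.comp_apply, (hIH t.1 t.2).2.2.1]; ring)]
        rw [List.sum_map_mul_right, List.attach_map_val (l := l) (f := SPD.W), ← hSdef]
        field_simp
      · rw [assign, SPD.Cost, SPD.W]
        conv_rhs => rw [List.attach_map_val]
        rw [List.attach_map_val, List.map_map]
        rw [show (List.map (fun s => s.W) l).sum = S from hSdef.symm]
        rw [List.map_congr_left
          (g := fun _ : {x // x ∈ l} => S / c)
          (fun t _ => by
            rw [Function.comp_apply, (hIH t.1 t.2).2.2.2]
            have h1 : SPD.W t.1 ≠ 0 := (hWt t.1 t.2).ne'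
            field_simp)]
        apply foldr_max_const _ (by positivity)
        · simp [hne]
        · intro x hx
          obtain ⟨t, ht, rfl⟩ := List.mem_map.1 hx
          rfl

end SPDAux

/-- Optimality of `𝒜^cont`, attainment part: for every SPD weight tree `T` (positive
leaf weights, nonempty compositions) and every capacity `c > 0`, there is an assignment
of positive shares to the leaves of `T` summing to `c` whose continuous streaming cost
is exactly `W(T)/c`. -/
theorem exists_shares_cost_eq_W_div_c (T : SPD ℝ) (hT : SPD.PosWeights T)
    (c : ℝ) (hc : 0 < c) :
    ∃ A : SPD (ℝ × ℝ), SPD.map Prod.fst A = T ∧ SPD.Valid A ∧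
      SPD.shareSum A = c ∧ SPD.Cost A = SPD.W T / c := by
  obtain ⟨h1, h2, h3, h4⟩ := SPDAux.main (sizeOf T) T le_rfl hT c hc
  exact ⟨SPDAux.assign T c, h1, h2, h3, h4⟩
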